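/- Let k be a field of characteristic zero and let a ∈ k with a ≠ 0. There is a k-algebra isomorphism k[X,Y]/(X·(X·Y−1) − a) ≅ k[T,T⁻¹], where k[T,T⁻¹] is the Laurent polynomial ring in one variable over k. (Equivalently, every fiber of Broughton's map f(x,y)=x(xy−1) over a nonzero value a is isomorphic to the multiplicative group 𝔾_{m,k}.) -/

import Mathlib

open MvPolynomial

local notation "LT" => LaurentPolynomial.T
local notation "LC" => LaurentPolynomial.C

set_option maxHeartbeats 800000 in
/-- Every fiber of Broughton's map `f(x,y) = x(xy−1)` over a nonzero value `a` is isomorphic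
to the multiplicative group: as `k`-algebras, `k[X,Y]/(X·(X·Y−1) − a) ≅ k[T,T⁻¹]`. -/
theorem stmt_1 (k : Type) [Field k] [CharZero k] (a : k) (ha : a ≠ 0) :
    Nonempty ((MvPolynomial (Fin 2) k ⧸
        Ideal.span {(X 0 * (X 0 * X 1 - 1) - C a : MvPolynomial (Fin 2) k)}) ≃ₐ[k]
      LaurentPolynomial k) := by
  set g : MvPolynomial (Fin 2) k := X 0 * (X 0 * X 1 - 1) - C a with hg
  set I := Ideal.span {g} with hI
  -- the forward map
  let φ : MvPolynomial (Fin 2) k →ₐ[k] LaurentPolynomial k :=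
    aeval ![LT 1, (LT 1 + LC a) * LT (-2)]
  have hφ0 : φ (X 0) = LT 1 := by simp [φ]
  have hφ1 : φ (X 1) = (LT 1 + LC a) * LT (-2) := by simp [φ]
  have hφC : ∀ c : k, φ (C c) = LC c := fun c => by
    simp [φ, algHom_C, LaurentPolynomial.algebraMap_apply, Algebra.algebraMap_self]
  have hTT : (LT 1 * LT 1 : LaurentPolynomial k) * LT (-2) = 1 := by
    rw [← LaurentPolynomial.T_add, ← LaurentPolynomial.T_add]; norm_num
  have hT1 : (LT 1 : LaurentPolynomial k) * LT (-1) = 1 := by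
    rw [← LaurentPolynomial.T_add]; norm_num
  have hCa : (LT 1 : LaurentPolynomial k) * LT (-2) = LT (-1) := by
    rw [← LaurentPolynomial.T_add]; norm_num
  have hφg : φ g = 0 := by
    simp only [hg, map_sub, map_mul, map_one, hφ0, hφ1, hφC]
    calc LT 1 * (LT 1 * ((LT 1 + LC a) * LT (-2)) - 1) - LC a
        = (LT 1 * LT 1 * LT (-2) - 1) * LT 1
          + LC a * (LT (-1) * LT 1) - LC a := by
            rw [← hCa]; ring
      _ = 0 := by
          rw [hTT, mul_comm (LT (-1) : LaurentPolynomial k) (LT 1), hT1]; ring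
  have hφI : ∀ p ∈ I, φ p = 0 := by
    intro p hp
    rw [hI, Ideal.mem_span_singleton] at hp
    obtain ⟨q, rfl⟩ := hp
    rw [map_mul, hφg, zero_mul]
  let φ' : (MvPolynomial (Fin 2) k ⧸ I) →ₐ[k] LaurentPolynomial k :=
    Ideal.Quotient.liftₐ I φ hφI
  have hφ' : ∀ p, φ' (Ideal.Quotient.mkₐ k I p) = φ p := fun p => by
    simp [φ', Ideal.Quotient.liftₐ_apply, Ideal.Quotient.mkₐ_eq_mk]
    exact Ideal.Quotient.lift_mk I _ hφI
  -- the quotient ring and the unit x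
  set mk : MvPolynomial (Fin 2) k →ₐ[k] MvPolynomial (Fin 2) k ⧸ I :=
    Ideal.Quotient.mkₐ k I with hmk
  set x : MvPolynomial (Fin 2) k ⧸ I := mk (X 0) with hx
  set y : MvPolynomial (Fin 2) k ⧸ I := mk (X 1) with hy
  have hmkg : mk g = 0 := by
    rw [hmk, Ideal.Quotient.mkₐ_eq_mk, Ideal.Quotient.eq_zero_iff_mem, hI]
    exact Ideal.mem_span_singleton_self g
  have key : x * (x * y - 1) = algebraMap k _ a := by
    have h0 : x * (x * y - 1) - algebraMap k _ a = 0 := by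
      rw [← hmkg, hg]
      simp only [map_sub, map_mul, map_one, ← hx, ← hy]
      rw [← MvPolynomial.algebraMap_eq, AlgHom.commutes]
    exact sub_eq_zero.mp h0
  -- the unit
  have huval : x * (algebraMap k _ a⁻¹ * (x * y - 1)) = 1 := by
    rw [show x * (algebraMap k _ a⁻¹ * (x * y - 1))
        = x * (x * y - 1) * algebraMap k _ a⁻¹ by ring, key, ← map_mul,
      mul_inv_cancel₀ ha, map_one]
  let u : (MvPolynomial (Fin 2) k ⧸ I)ˣ :=
    ⟨x, algebraMap k _ a⁻¹ * (x * y - 1), huval, by rw [mul_comm]; exact huval⟩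
  -- the inverse map
  let ψ : LaurentPolynomial k →ₐ[k] MvPolynomial (Fin 2) k ⧸ I :=
    AddMonoidAlgebra.lift k _ ℤ
      ((Units.coeHom _).comp (zpowersHom (MvPolynomial (Fin 2) k ⧸ I)ˣ u))
  have hψT : ∀ n : ℤ, ψ (LT n) = ((u ^ n : (MvPolynomial (Fin 2) k ⧸ I)ˣ) :
      MvPolynomial (Fin 2) k ⧸ I) := fun n => by
    have : (LT n : LaurentPolynomial k) = AddMonoidAlgebra.single n 1 := rfl
    rw [this, AddMonoidAlgebra.lift_single, one_smul]
    rfl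
  have hφux : φ' ((u : (MvPolynomial (Fin 2) k ⧸ I)ˣ) : MvPolynomial (Fin 2) k ⧸ I)
      = LT 1 := by
    show φ' x = _
    rw [hx, hφ', hφ0]
  have hφuinv : φ' ((↑u⁻¹ : MvPolynomial (Fin 2) k ⧸ I)) = LT (-1) := by
    have h2 : LT 1 * φ' (↑u⁻¹ : MvPolynomial (Fin 2) k ⧸ I) = 1 := by
      rw [← hφux, ← map_mul, Units.mul_inv, map_one]
    calc φ' (↑u⁻¹ : MvPolynomial (Fin 2) k ⧸ I)
        = (LT (-1) * LT 1) * φ' (↑u⁻¹ : MvPolynomial (Fin 2) k ⧸ I) := by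
          rw [mul_comm (LT (-1) : LaurentPolynomial k), hT1, one_mul]
      _ = LT (-1) := by rw [mul_assoc, h2, mul_one]
  have hφu : ∀ n : ℤ, φ' ((u ^ n : (MvPolynomial (Fin 2) k ⧸ I)ˣ) :
      MvPolynomial (Fin 2) k ⧸ I) = LT n := by
    intro n
    induction n using Int.induction_on with
    | zero => simp
    | succ m ih =>
        rw [zpow_add_one, Units.val_mul, map_mul, ih, hφux, ← LaurentPolynomial.T_add]
    | pred m ih =>
        rw [zpow_sub_one, Units.val_mul, map_mul, ih, hφuinv, ← LaurentPolynomial.T_add]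
        congr 1
  have h1 : φ'.comp ψ = AlgHom.id k (LaurentPolynomial k) := by
    apply AddMonoidAlgebra.algHom_ext
    intro n
    rw [AlgHom.coe_comp, Function.comp_apply,
      show (AddMonoidAlgebra.single n 1 : LaurentPolynomial k) = LT n from rfl,
      hψT, hφu, AlgHom.id_apply]
    exact Subsingleton.elim _ _
  have hu2 : ((u ^ (2:ℤ) : (MvPolynomial (Fin 2) k ⧸ I)ˣ) : MvPolynomial (Fin 2) k ⧸ I)
      = x ^ 2 := by
    rw [show (2:ℤ) = ((2:ℕ) : ℤ) from rfl, zpow_natCast, Units.val_pow_eq_pow_val]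
  have hyx : x + algebraMap k _ a = y * x ^ 2 := by
    have h3 : y * x ^ 2 = x * (x * y - 1) + x := by ring
    rw [h3, key, add_comm]
  have h2 : ψ.comp φ' = AlgHom.id k (MvPolynomial (Fin 2) k ⧸ I) := by
    apply Ideal.Quotient.algHom_ext
    apply MvPolynomial.algHom_ext
    intro i
    fin_cases i
    · show ψ (φ' (mk (X 0))) = mk (X 0)
      rw [hφ', hφ0, show (LT 1 : LaurentPolynomial k) = LT (1:ℤ) from rfl, hψT, zpow_one]
    · show ψ (φ' (mk (X 1))) = mk (X 1)
      rw [hφ', hφ1, map_mul, map_add]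
      have hψC : ψ (LC a) = algebraMap k _ a := by
        rw [LaurentPolynomial.C_eq_algebraMap, AlgHom.commutes]
      rw [show (LT 1 : LaurentPolynomial k) = LT (1:ℤ) from rfl, hψT, hψC, zpow_one,
        show ((u : (MvPolynomial (Fin 2) k ⧸ I)ˣ) : MvPolynomial (Fin 2) k ⧸ I) = x from rfl,
        hψT, hyx, hu2.symm, mul_assoc, ← Units.val_mul, ← zpow_add]
      norm_num
      exact hy
  exact ⟨AlgEquiv.ofAlgHom φ' ψ h1 h2⟩
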